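/- Assume: (i) (B,‖·‖) is a Banach space whose elements are measurable functions E → ℂ, containing the constant function 𝟏, with B ⊆ L³(ν) continuously, Q ∈ 𝓛(B), and Q is B-geometrically ergodic, i.e. there are C ≥ 0 and κ₀ < 1 with ‖Q^n f − ν(f)𝟏‖ ≤ C κ₀^n ‖f‖ for all n ≥ 1, f ∈ B; (ii) ξ ∈ B is real-valued with ν(ξ) = 0, the series ξ̌ = Σ_{n≥0} Q^n ξ converges absolutely in B, σ² = ν(ξ̌²) − ν((Qξ̌)²) and ψ = Q(ξ̌²) − (Qξ̌)² − σ²·𝟏; (iii) (B₂,‖·‖₂) is a Banach space of measurable functions E → ℂ, continuously embedded in L¹(ν), containing the product gh for all g, h ∈ B, with Q ∈ 𝓛(B₂), Q B₂-geometrically ergodic, and such that there is A > 0 with (∫|f|^{3/2} dν)^{2/3} ≤ A‖f‖₂ for every f ∈ B₂. Then Σ_{p=0}^∞ (∫_E |Q^p ψ|^{3/2} dν)^{2/3} < ∞. -/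

import Mathlib

open MeasureTheory

open ProbabilityTheory in
lemma aux_snd_compProd {E : Type*} [MeasurableSpace E]
    (Q : ProbabilityTheory.Kernel E E) [ProbabilityTheory.IsMarkovKernel Q]
    (ν : Measure E) [IsProbabilityMeasure ν] :
    (ν ⊗ₘ Q).snd = ν.bind (fun x => Q x) := by
  ext s hs
  rw [Measure.snd_apply hs, Measure.compProd_apply (measurable_snd hs),
    Measure.bind_apply hs Q.measurable.aemeasurable]
  rfl

open ProbabilityTheory in
lemma aux_integral_bind {E : Type*} [MeasurableSpace E]
    (Q : ProbabilityTheory.Kernel E E) [ProbabilityTheory.IsMarkovKernel Q]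
    (ν : Measure E) [IsProbabilityMeasure ν] (f : E → ℂ) (hf : Measurable f)
    (hint : Integrable f (ν.bind (fun x => Q x))) :
    ∫ y, f y ∂(ν.bind (fun x => Q x)) = ∫ x, ∫ y, f y ∂(Q x) ∂ν := by
  have hmap : ν.bind (fun x => Q x) = (ν ⊗ₘ Q).map Prod.snd := by
    rw [← aux_snd_compProd Q ν]; rfl
  have hint2 : Integrable (fun z : E × E => f z.2) (ν ⊗ₘ Q) :=
    (integrable_map_measure (hmap ▸ hf.aestronglyMeasurable)
      measurable_snd.aemeasurable).mp (hmap ▸ hint)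
  calc ∫ y, f y ∂(ν.bind (fun x => Q x))
      = ∫ z : E × E, f z.2 ∂(ν ⊗ₘ Q) := by
        rw [hmap, integral_map measurable_snd.aemeasurable (hmap ▸ hf.aestronglyMeasurable)]
    _ = ∫ x, ∫ y, f y ∂(Q x) ∂ν := Measure.integral_compProd hint2

/-- Remark 2 of the paper: a sufficient criterion for hypothesis (H2). If `Q` is
`B`-geometrically ergodic with `B ⊆ L³(ν)` continuously, `ξ ∈ B`, and `B₂` is a Banach
space containing the products of elements of `B`, on which `Q` is geometrically ergodic
and whose norm dominates the `L^{3/2}(ν)`-norm, then `Σ_p ν(|Q^p ψ|^{3/2})^{2/3} < ∞`. -/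
theorem stmt_17
    {E : Type*} [MeasurableSpace E]
    (Q : ProbabilityTheory.Kernel E E) [ProbabilityTheory.IsMarkovKernel Q]
    (ν : Measure E) [IsProbabilityMeasure ν]
    (hinv : ν.bind (fun x => Q x) = ν)
    -- the action of `Q` on real functions
    (Qop : (E → ℝ) → E → ℝ) (hQop : ∀ f x, Qop f x = ∫ y, f y ∂(Q x))
    -- (i) the Banach space `B` of measurable functions, with `𝟏 ∈ B`, `B ⊆ L³(ν)`
    -- continuously, `Q ∈ 𝓛(B)`, and `Q` `B`-geometrically ergodic
    {B : Type*} [NormedAddCommGroup B] [NormedSpace ℂ B] [CompleteSpace B]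
    (ι : B →ₗ[ℂ] (E → ℂ)) (hιinj : Function.Injective ι)
    (hιmeas : ∀ f : B, Measurable (ι f))
    (one : B) (hone : ι one = fun _ => 1)
    (hL3 : ∀ f : B, MemLp (ι f) 3 ν)
    (K : ℝ) (hK : ∀ f : B, (∫ x, ‖ι f x‖ ^ 3 ∂ν) ^ ((1 : ℝ) / 3) ≤ K * ‖f‖)
    (QB : B →L[ℂ] B) (hQB : ∀ f : B, ι (QB f) = fun x => ∫ y, ι f y ∂(Q x))
    (C κ₀ : ℝ) (hC : 0 ≤ C) (hκ₀0 : 0 ≤ κ₀) (hκ₀1 : κ₀ < 1)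
    (herg : ∀ n : ℕ, 1 ≤ n → ∀ f : B,
      ‖(QB ^ n) f - (∫ x, ι f x ∂ν) • one‖ ≤ C * κ₀ ^ n * ‖f‖)
    -- (ii) `ξ ∈ B` real-valued with `ν(ξ) = 0`, `ξ̌ = Σ Qⁿξ` converging absolutely in `B`,
    -- and the associated `σ²` and `ψ`
    (ξB : B) (ξ : E → ℝ) (hξ : ∀ x, ι ξB x = (ξ x : ℂ)) (hξν : ∫ x, ξ x ∂ν = 0)
    (hsum : Summable fun n => ‖(QB ^ n) ξB‖)
    (ξcB : B) (hξcB : HasSum (fun n => (QB ^ n) ξB) ξcB)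
    (ξc : E → ℝ) (hξc : ∀ x, ι ξcB x = (ξc x : ℂ))
    (σ2 : ℝ) (hσ2 : σ2 = (∫ x, ξc x ^ 2 ∂ν) - ∫ x, Qop ξc x ^ 2 ∂ν)
    (ψ : E → ℝ) (hψ : ∀ x, ψ x = Qop (fun y => ξc y ^ 2) x - Qop ξc x ^ 2 - σ2)
    -- (iii) the Banach space `B₂`, continuously embedded in `L¹(ν)`, containing the
    -- products of elements of `B`, with `Q ∈ 𝓛(B₂)` `B₂`-geometrically ergodic, and whose
    -- norm dominates the `L^{3/2}(ν)` norm
    {B₂ : Type*} [NormedAddCommGroup B₂] [NormedSpace ℂ B₂] [CompleteSpace B₂]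
    (ι₂ : B₂ →ₗ[ℂ] (E → ℂ)) (hι₂inj : Function.Injective ι₂)
    (hι₂meas : ∀ f : B₂, Measurable (ι₂ f))
    (one₂ : B₂) (hone₂ : ι₂ one₂ = fun _ => 1)
    (hL1 : ∀ f : B₂, Integrable (ι₂ f) ν)
    (K₂ : ℝ) (hK₂ : ∀ f : B₂, (∫ x, ‖ι₂ f x‖ ∂ν) ≤ K₂ * ‖f‖)
    (hprod : ∀ g h : B, ∃ p : B₂, ι₂ p = fun x => ι g x * ι h x)
    (QB₂ : B₂ →L[ℂ] B₂) (hQB₂ : ∀ f : B₂, ι₂ (QB₂ f) = fun x => ∫ y, ι₂ f y ∂(Q x))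
    (C₂ κ₂ : ℝ) (hC₂ : 0 ≤ C₂) (hκ₂0 : 0 ≤ κ₂) (hκ₂1 : κ₂ < 1)
    (herg₂ : ∀ n : ℕ, 1 ≤ n → ∀ f : B₂,
      ‖(QB₂ ^ n) f - (∫ x, ι₂ f x ∂ν) • one₂‖ ≤ C₂ * κ₂ ^ n * ‖f‖)
    (A : ℝ) (hA : 0 < A)
    (hA32 : ∀ f : B₂, (∫ x, ‖ι₂ f x‖ ^ (3 / 2 : ℝ) ∂ν) ^ (2 / 3 : ℝ) ≤ A * ‖f‖) :
    Summable fun p => (∫ x, |Qop^[p] ψ x| ^ (3 / 2 : ℝ) ∂ν) ^ (2 / 3 : ℝ) := by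
  classical
  -- Step function for representatives
  have hstep : ∀ (f : B₂) (g : E → ℝ), (∀ x, ι₂ f x = (g x : ℂ)) →
      ∀ x, ι₂ (QB₂ f) x = ((Qop g x : ℝ) : ℂ) := by
    intro f g hg x
    calc ι₂ (QB₂ f) x = ∫ y, ι₂ f y ∂(Q x) := congrFun (hQB₂ f) x
      _ = ∫ y, ((g y : ℝ) : ℂ) ∂(Q x) := by simp_rw [hg]
      _ = ((∫ y, g y ∂(Q x) : ℝ) : ℂ) := integral_ofReal
      _ = ((Qop g x : ℝ) : ℂ) := by rw [hQop]
  obtain ⟨p2, hp2⟩ := hprod ξcB ξcB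
  obtain ⟨q2, hq2⟩ := hprod (QB ξcB) (QB ξcB)
  have hQξc : ∀ x, ι (QB ξcB) x = ((Qop ξc x : ℝ) : ℂ) := by
    intro x
    calc ι (QB ξcB) x = ∫ y, ι ξcB y ∂(Q x) := congrFun (hQB ξcB) x
      _ = ∫ y, ((ξc y : ℝ) : ℂ) ∂(Q x) := by simp_rw [hξc]
      _ = ((∫ y, ξc y ∂(Q x) : ℝ) : ℂ) := integral_ofReal
      _ = ((Qop ξc x : ℝ) : ℂ) := by rw [hQop]
  have hp2' : ∀ x, ι₂ p2 x = ((ξc x ^ 2 : ℝ) : ℂ) := by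
    intro x
    rw [congrFun hp2 x, hξc x]
    push_cast
    ring
  have hq2' : ∀ x, ι₂ q2 x = ((Qop ξc x ^ 2 : ℝ) : ℂ) := by
    intro x
    rw [congrFun hq2 x, hQξc x]
    push_cast
    ring
  set ψB : B₂ := QB₂ p2 - q2 - (σ2 : ℂ) • one₂ with hψBdef
  have hψB : ∀ x, ι₂ ψB x = ((ψ x : ℝ) : ℂ) := by
    intro x
    have h1 := hstep p2 (fun y => ξc y ^ 2) hp2' x
    have h3 : ι₂ ((σ2 : ℂ) • one₂) x = (σ2 : ℂ) := by
      rw [_root_.map_smul]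
      simp [hone₂]
    rw [hψBdef, map_sub, map_sub, Pi.sub_apply, Pi.sub_apply, h1, hq2' x, h3, hψ x]
    push_cast
    ring
  have hrep : ∀ (p : ℕ) (x : E), ι₂ ((QB₂ ^ p) ψB) x = ((Qop^[p] ψ x : ℝ) : ℂ) := by
    intro p
    induction p with
    | zero => simpa using hψB
    | succ n ih =>
      intro x
      have h1 : (QB₂ ^ (n + 1)) ψB = QB₂ ((QB₂ ^ n) ψB) := by
        rw [pow_succ']; rfl
      have h2 := hstep ((QB₂ ^ n) ψB) (Qop^[n] ψ) ih x
      rw [h1, h2, Function.iterate_succ_apply']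
  -- invariance of the integral
  have hbind : ∀ f : B₂, ∫ x, ι₂ (QB₂ f) x ∂ν = ∫ x, ι₂ f x ∂ν := by
    intro f
    have hint : Integrable (ι₂ f) (ν.bind (fun x => Q x)) := by rw [hinv]; exact hL1 f
    calc ∫ x, ι₂ (QB₂ f) x ∂ν = ∫ x, ∫ y, ι₂ f y ∂(Q x) ∂ν := by
          simp_rw [hQB₂ f]
      _ = ∫ y, ι₂ f y ∂(ν.bind fun x => Q x) :=
          (aux_integral_bind Q ν (ι₂ f) (hι₂meas f) hint).symm
      _ = ∫ x, ι₂ f x ∂ν := by rw [hinv]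
  have hν0 : ∫ x, ι₂ ψB x ∂ν = 0 := by
    have hi1 : Integrable (ι₂ (QB₂ p2)) ν := hL1 _
    have hi2 : Integrable (ι₂ q2) ν := hL1 _
    have hi3 : Integrable (ι₂ ((σ2 : ℂ) • one₂)) ν := hL1 _
    have hsplit : ∫ x, ι₂ ψB x ∂ν =
        ∫ x, ι₂ (QB₂ p2) x ∂ν - ∫ x, ι₂ q2 x ∂ν - ∫ x, ι₂ ((σ2 : ℂ) • one₂) x ∂ν := by
      rw [hψBdef, map_sub, map_sub, integral_sub' (hi1.sub hi2) hi3, integral_sub' hi1 hi2]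
    have e1 : ∫ x, ι₂ p2 x ∂ν = ((∫ x, ξc x ^ 2 ∂ν : ℝ) : ℂ) := by
      simp_rw [hp2']; exact integral_ofReal
    have e2 : ∫ x, ι₂ q2 x ∂ν = ((∫ x, Qop ξc x ^ 2 ∂ν : ℝ) : ℂ) := by
      simp_rw [hq2']; exact integral_ofReal
    have e3 : ∫ x, ι₂ ((σ2 : ℂ) • one₂) x ∂ν = (σ2 : ℂ) := by
      simp_rw [_root_.map_smul, Pi.smul_apply, hone₂]
      simp
    rw [hsplit, hbind p2, e1, e2, e3, hσ2]
    push_cast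
    ring
  -- the L^{3/2} bound
  have hA32p : ∀ p : ℕ, (∫ x, |Qop^[p] ψ x| ^ (3 / 2 : ℝ) ∂ν) ^ (2 / 3 : ℝ)
      ≤ A * ‖(QB₂ ^ p) ψB‖ := by
    intro p
    have h := hA32 ((QB₂ ^ p) ψB)
    have heq : ∀ x, ‖ι₂ ((QB₂ ^ p) ψB) x‖ = |Qop^[p] ψ x| := by
      intro x
      rw [hrep p x, Complex.norm_real, Real.norm_eq_abs]
    simp_rw [heq] at h
    exact h
  have hnn : ∀ p : ℕ, 0 ≤ (∫ x, |Qop^[p] ψ x| ^ (3 / 2 : ℝ) ∂ν) ^ (2 / 3 : ℝ) := by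
    intro p
    exact Real.rpow_nonneg (integral_nonneg fun x => Real.rpow_nonneg (abs_nonneg _) _) _
  rw [← summable_nat_add_iff 1]
  refine Summable.of_nonneg_of_le (fun p => hnn _) (fun p => ?_)
    (((summable_geometric_of_lt_one hκ₂0 hκ₂1).mul_left (A * (C₂ * κ₂ * ‖ψB‖))))
  have herg' := herg₂ (p + 1) (Nat.le_add_left 1 p) ψB
  rw [hν0, zero_smul, sub_zero] at herg'
  calc (∫ x, |Qop^[p + 1] ψ x| ^ (3 / 2 : ℝ) ∂ν) ^ (2 / 3 : ℝ)
      ≤ A * ‖(QB₂ ^ (p + 1)) ψB‖ := hA32p (p + 1)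
    _ ≤ A * (C₂ * κ₂ ^ (p + 1) * ‖ψB‖) := by
        exact mul_le_mul_of_nonneg_left herg' hA.le
    _ = A * (C₂ * κ₂ * ‖ψB‖) * κ₂ ^ p := by ring
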